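/- Let ψ: 𝕋 → ℂ be continuous and Q[ψ](z) = (1/2π)∫₀^{2π} \bar{z}e^{it}ψ(e^{it})(1-|z|²)/(1-\bar{z}e^{it})² dt. Then for z = re^{iθ} ∈ 𝔻, ∂_z Q[ψ](z) = -(1/2π)∫₀^{2π} (ψ(e^{it}) - ψ(e^{iθ})) \bar{z}² e^{it}/(1-\bar{z}e^{it})² dt. -/

import Mathlib

open Complex

/-- `Q[ψ](z) = (1/2π)∫₀^{2π} z̄ e^{it} ψ(e^{it}) (1-|z|²)/(1-z̄e^{it})² dt`. -/
noncomputable def Qop (ψ : ℂ → ℂ) (z : ℂ) : ℂ :=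
  (1 / (2 * Real.pi)) • ∫ t in (0:ℝ)..(2 * Real.pi),
    (starRingEnd ℂ) z * Complex.exp (t * Complex.I) * ψ (Complex.exp (t * Complex.I)) *
      ((1 - ‖z‖ ^ 2 : ℝ) : ℂ) /
        (1 - (starRingEnd ℂ) z * Complex.exp (t * Complex.I)) ^ 2

/-- The Wirtinger derivative `∂_z f = (∂_x f - i ∂_y f)/2`. -/
noncomputable def wdz (f : ℂ → ℂ) (z : ℂ) : ℂ :=
  (fderiv ℝ f z 1 - Complex.I * fderiv ℝ f z Complex.I) / 2

/-- The Wirtinger derivative `∂_z̄ f = (∂_x f + i ∂_y f)/2`. -/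
noncomputable def wdzbar (f : ℂ → ℂ) (z : ℂ) : ℂ :=
  (fderiv ℝ f z 1 + Complex.I * fderiv ℝ f z Complex.I) / 2

/-! ### Auxiliary definitions and lemmas -/

/-- Conjugation as a real-linear continuous map. -/
noncomputable def Cc : ℂ →L[ℝ] ℂ := Complex.conjCLE

/-- The circle parametrization. -/
noncomputable def ee (t : ℝ) : ℂ := Complex.exp (t * Complex.I)

@[fun_prop] lemma ee_cont : Continuous ee :=
  Complex.continuous_exp.comp (Complex.continuous_ofReal.mul continuous_const)

lemma ee_abs (t : ℝ) : ‖ee t‖ = 1 := by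
  simp [ee]

lemma ee_norm (t : ℝ) : ‖ee t‖ = 1 := by
  rw [ee_abs]

lemma den_ne {w : ℂ} (hw : ‖w‖ < 1) (t : ℝ) : 1 - w * ee t ≠ 0 := by
  intro h
  have h2 : w * ee t = 1 := by linear_combination -h
  have := congrArg (‖·‖) h2
  simp [map_mul, ee_abs] at this
  simp [this] at hw

lemma integral_zero' {w : ℂ} (hw : ‖w‖ < 1) :
    (∫ t in (0:ℝ)..(2*Real.pi), w^2 * ee t / (1 - w * ee t)^2) = 0 := by
  have hder : ∀ t : ℝ, HasDerivAt (fun s => -Complex.I * w * (1 / (1 - w * ee s)))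
      (w^2 * ee t / (1 - w * ee t)^2) t := by
    intro t
    have hexp : HasDerivAt (fun s : ℝ => ee s) (Complex.I * ee t) t := by
      have h : HasDerivAt (fun s : ℝ => (s : ℂ) * Complex.I) Complex.I t := by
        simpa using (Complex.ofRealCLM.hasDerivAt (x := t)).mul_const Complex.I
      simpa [ee, mul_comm] using h.cexp
    have h2 : HasDerivAt (fun s : ℝ => 1 - w * ee s) (-(w * (Complex.I * ee t))) t :=
      (hexp.const_mul w).const_sub 1
    have h3 := (hasDerivAt_const t (1:ℂ)).div h2 (den_ne hw t)
    have h4 := h3.const_mul (-Complex.I * w)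
    refine h4.congr_deriv ?_
    rw [← mul_div_assoc]
    congr 1
    linear_combination (-(w ^ 2 * ee t)) * Complex.I_sq
  have hcont : Continuous fun t : ℝ => w^2 * ee t / (1 - w * ee t)^2 :=
    Continuous.div (by fun_prop) (by fun_prop) (fun t => pow_ne_zero 2 (den_ne hw t))
  rw [intervalIntegral.integral_eq_sub_of_hasDerivAt (fun t _ => hder t)
    (hcont.intervalIntegrable _ _)]
  have h1 : ee (2*Real.pi) = 1 := by
    simp only [ee]
    push_cast
    exact Complex.exp_two_pi_mul_I
  have h0 : ee 0 = 1 := by simp [ee]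
  rw [h1, h0, sub_self]

noncomputable def Ff (ψ : ℂ → ℂ) (z : ℂ) (t : ℝ) : ℂ :=
  (1 - z * (starRingEnd ℂ) z) *
    ((starRingEnd ℂ) z * ee t * ψ (ee t) / (1 - (starRingEnd ℂ) z * ee t) ^ 2)

noncomputable def Aa (ψ : ℂ → ℂ) (z : ℂ) (t : ℝ) : ℂ :=
  (1 - z * (starRingEnd ℂ) z) *
      (ee t * ψ (ee t) * (1 + (starRingEnd ℂ) z * ee t) / (1 - (starRingEnd ℂ) z * ee t) ^ 3)
    - z * ((starRingEnd ℂ) z * ee t * ψ (ee t) / (1 - (starRingEnd ℂ) z * ee t) ^ 2)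

noncomputable def Bb (ψ : ℂ → ℂ) (z : ℂ) (t : ℝ) : ℂ :=
  -((starRingEnd ℂ) z * ((starRingEnd ℂ) z * ee t * ψ (ee t) / (1 - (starRingEnd ℂ) z * ee t) ^ 2))

noncomputable def Ff' (ψ : ℂ → ℂ) (z : ℂ) (t : ℝ) : ℂ →L[ℝ] ℂ :=
  Aa ψ z t • Cc + Bb ψ z t • ContinuousLinearMap.id ℝ ℂ

lemma conj_abs_lt {z : ℂ} (hz : ‖z‖ < 1) : ‖(starRingEnd ℂ) z‖ < 1 := by
  rwa [RCLike.norm_conj]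

lemma hasFDerivAt_Ff (ψ : ℂ → ℂ) {x : ℂ} (hx : ‖x‖ < 1) (t : ℝ) :
    HasFDerivAt (fun z => Ff ψ z t) (Ff' ψ x t) x := by
  set u := (starRingEnd ℂ) x with hu
  set c := ee t with hc
  have hne : 1 - u * c ≠ 0 := den_ne (conj_abs_lt hx) t
  have hφ : HasDerivAt (fun u : ℂ => u * c * ψ c / (1 - u * c) ^ 2)
      (c * ψ c * (1 + u * c) / (1 - u * c) ^ 3) u := by
    have h1 : HasDerivAt (fun u : ℂ => u * c * ψ c) (c * ψ c) u := by
      simpa using ((hasDerivAt_id u).mul_const c).mul_const (ψ c)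
    have h2 : HasDerivAt (fun u : ℂ => (1 - u * c) ^ 2) (2 * (1 - u * c) * (-c)) u := by
      have := (((hasDerivAt_id u).mul_const c).const_sub 1).pow 2
      exact this.congr_deriv (by simp only [id, Nat.cast_ofNat, show 2 - 1 = 1 from rfl, pow_one]; ring)
    have := h1.div h2 (pow_ne_zero 2 hne)
    refine this.congr_deriv ?_
    field_simp
    ring
  have hf2 : HasFDerivAt (fun z => (starRingEnd ℂ) z * c * ψ c / (1 - (starRingEnd ℂ) z * c) ^ 2)
      ((c * ψ c * (1 + u * c) / (1 - u * c) ^ 3) • Cc) x := by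
    have h := (hφ.hasFDerivAt.restrictScalars ℝ).comp x (Cc.hasFDerivAt (x := x))
    refine h.congr_fderiv ?_
    ext v
    simp [Cc, mul_comm]
  have hf1 : HasFDerivAt (fun z : ℂ => 1 - z * (starRingEnd ℂ) z)
      (-(x • Cc + u • ContinuousLinearMap.id ℝ ℂ)) x :=
    ((hasFDerivAt_id x).mul (Cc.hasFDerivAt (x := x))).const_sub 1
  have h := hf1.mul hf2
  refine h.congr_fderiv ?_
  ext v
  simp [Ff', Aa, Bb, Cc, smul_smul]
  ring

lemma Ff_cont {ψ : ℂ → ℂ} (hψ : Continuous ψ) {z : ℂ} (hz : ‖z‖ < 1) :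
    Continuous fun t => Ff ψ z t := by
  unfold Ff
  exact continuous_const.mul (Continuous.div (by fun_prop) (by fun_prop)
    (fun t => pow_ne_zero 2 (den_ne (conj_abs_lt hz) t)))

lemma Aa_cont {ψ : ℂ → ℂ} (hψ : Continuous ψ) {z : ℂ} (hz : ‖z‖ < 1) :
    Continuous fun t => Aa ψ z t := by
  unfold Aa
  exact (continuous_const.mul (Continuous.div (by fun_prop) (by fun_prop)
      (fun t => pow_ne_zero 3 (den_ne (conj_abs_lt hz) t)))).sub
    (continuous_const.mul (Continuous.div (by fun_prop) (by fun_prop)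
      (fun t => pow_ne_zero 2 (den_ne (conj_abs_lt hz) t))))

lemma Bb_cont {ψ : ℂ → ℂ} (hψ : Continuous ψ) {z : ℂ} (hz : ‖z‖ < 1) :
    Continuous fun t => Bb ψ z t := by
  unfold Bb
  exact (continuous_const.mul (Continuous.div (by fun_prop) (by fun_prop)
    (fun t => pow_ne_zero 2 (den_ne (conj_abs_lt hz) t)))).neg

lemma Ff'_cont {ψ : ℂ → ℂ} (hψ : Continuous ψ) {z : ℂ} (hz : ‖z‖ < 1) :
    Continuous fun t => Ff' ψ z t := by
  unfold Ff'
  exact ((Aa_cont hψ hz).smul continuous_const).add ((Bb_cont hψ hz).smul continuous_const)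

lemma Cc_norm_le : ‖Cc‖ ≤ 1 := by
  refine ContinuousLinearMap.opNorm_le_bound _ zero_le_one fun v => ?_
  simp [Cc]

set_option maxHeartbeats 1000000 in
lemma Ff'_bound (ψ : ℂ → ℂ) {M δ : ℝ} (hδ : 0 < δ)
    (hψM : ∀ t : ℝ, ‖ψ (ee t)‖ ≤ M) {x : ℂ} (hx : ‖x‖ ≤ 1)
    (hden : ∀ t : ℝ, δ ≤ ‖1 - (starRingEnd ℂ) x * ee t‖) (t : ℝ) :
    ‖Ff' ψ x t‖ ≤ 2 * (1 * M * 2 / δ ^ 3) + 1 * (1 * 1 * M / δ ^ 2) + 1 * (1 * 1 * M / δ ^ 2) := by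
  have hM0 : (0:ℝ) ≤ M := le_trans (norm_nonneg _) (hψM 0)
  have hcx : ‖(starRingEnd ℂ) x‖ = ‖x‖ := RCLike.norm_conj x
  have h1 : ‖(1:ℂ) - x * (starRingEnd ℂ) x‖ ≤ 2 := by
    refine (norm_sub_le _ _).trans ?_
    rw [norm_mul, hcx, norm_one]
    nlinarith [norm_nonneg x]
  have h2 : ‖(1:ℂ) + (starRingEnd ℂ) x * ee t‖ ≤ 2 := by
    refine (norm_add_le _ _).trans ?_
    rw [norm_mul, hcx, ee_norm, norm_one, mul_one]
    linarith
  have hA : ‖Aa ψ x t‖ ≤ 2 * (1 * M * 2 / δ ^ 3) + 1 * (1 * 1 * M / δ ^ 2) := by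
    refine (norm_sub_le _ _).trans (add_le_add ?_ ?_)
    · simp only [norm_mul, norm_div, norm_pow]
      gcongr <;> first
        | exact (ee_norm t).le
        | exact hψM t
        | exact hden t
        | exact hcx.le.trans hx
        | exact hx
        | exact h1
        | exact h2
    · simp only [norm_mul, norm_div, norm_pow]
      gcongr <;> first
        | exact (ee_norm t).le
        | exact hψM t
        | exact hden t
        | exact hcx.le.trans hx
        | exact hx
        | exact h1
        | exact h2
  have hB : ‖Bb ψ x t‖ ≤ 1 * (1 * 1 * M / δ ^ 2) := by
    rw [Bb, norm_neg]
    simp only [norm_mul, norm_div, norm_pow]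
    gcongr <;> first
        | exact (ee_norm t).le
        | exact hψM t
        | exact hden t
        | exact hcx.le.trans hx
        | exact hx
        | exact h1
        | exact h2
  rw [Ff']
  calc ‖Aa ψ x t • Cc + Bb ψ x t • ContinuousLinearMap.id ℝ ℂ‖
      ≤ ‖Aa ψ x t • Cc‖ + ‖Bb ψ x t • ContinuousLinearMap.id ℝ ℂ‖ := norm_add_le _ _
    _ ≤ ‖Aa ψ x t‖ * ‖Cc‖ + ‖Bb ψ x t‖ * ‖ContinuousLinearMap.id ℝ ℂ‖ :=
        add_le_add (ContinuousLinearMap.opNorm_smul_le _ _) (ContinuousLinearMap.opNorm_smul_le _ _)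
    _ ≤ (2 * (1 * M * 2 / δ ^ 3) + 1 * (1 * 1 * M / δ ^ 2)) * 1 + (1 * (1 * 1 * M / δ ^ 2)) * 1 := by
        gcongr
        · exact Cc_norm_le
        · exact ContinuousLinearMap.norm_id_le
    _ = _ := by ring

lemma Cc_apply (v : ℂ) : Cc v = (starRingEnd ℂ) v := rfl

lemma ee_def (t : ℝ) : Complex.exp ((t : ℂ) * Complex.I) = ee t := rfl

/-- For continuous `ψ` on the circle and `z = re^{iθ} ∈ 𝔻`:
`∂_z Q[ψ](z) = -(1/2π)∫₀^{2π} (ψ(e^{it}) - ψ(e^{iθ})) z̄² e^{it}/(1-z̄e^{it})² dt`. -/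
theorem wdz_Qop_formula (ψ : ℂ → ℂ) (hψ : Continuous ψ) (r θ : ℝ) (hr0 : 0 ≤ r) (hr1 : r < 1) :
    wdz (Qop ψ) ((r : ℂ) * Complex.exp (θ * Complex.I))
      = -((1 / (2 * Real.pi)) • ∫ t in (0:ℝ)..(2 * Real.pi),
          (ψ (Complex.exp (t * Complex.I)) - ψ (Complex.exp (θ * Complex.I))) *
            ((starRingEnd ℂ) ((r : ℂ) * Complex.exp (θ * Complex.I))) ^ 2 *
              Complex.exp (t * Complex.I) /
                (1 - (starRingEnd ℂ) ((r : ℂ) * Complex.exp (θ * Complex.I)) *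
                  Complex.exp (t * Complex.I)) ^ 2) := by
  set z₀ : ℂ := (r : ℂ) * Complex.exp (θ * Complex.I) with hz₀
  set w : ℂ := (starRingEnd ℂ) z₀ with hw
  have habs : ‖z₀‖ = r := by
    rw [hz₀, norm_mul, Complex.norm_exp_ofReal_mul_I, mul_one, Complex.norm_real,
      Real.norm_of_nonneg hr0]
  have habs1 : ‖z₀‖ < 1 := by rw [habs]; exact hr1
  have hwabs : ‖w‖ < 1 := by rw [hw, RCLike.norm_conj]; exact habs1
  set ε : ℝ := (1 - r) / 2 with hε
  have hεpos : 0 < ε := by rw [hε]; linarith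
  -- bound for ψ on the circle
  obtain ⟨M, hM⟩ : ∃ M : ℝ, ∀ t : ℝ, ‖ψ (ee t)‖ ≤ M := by
    obtain ⟨M, hM⟩ := (isCompact_sphere (0:ℂ) 1).exists_bound_of_continuousOn hψ.continuousOn
    exact ⟨M, fun t => hM _ (by rw [mem_sphere_zero_iff_norm, ee_norm])⟩
  -- facts about points in the ball
  have hball : ∀ x ∈ Metric.ball z₀ ε, ‖x‖ ≤ (1 + r) / 2 := by
    intro x hx
    have h1 : ‖x - z₀‖ < ε := by rwa [Metric.mem_ball, dist_eq_norm] at hx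
    have h2 : ‖z₀‖ = r := by rw [habs]
    calc ‖x‖ = ‖z₀ + (x - z₀)‖ := by ring_nf
      _ ≤ ‖z₀‖ + ‖x - z₀‖ := norm_add_le _ _
      _ ≤ r + ε := by rw [h2]; linarith
      _ = (1 + r) / 2 := by rw [hε]; ring
  have hball1 : ∀ x ∈ Metric.ball z₀ ε, ‖x‖ < 1 := by
    intro x hx
    have := hball x hx
    calc ‖x‖ ≤ (1 + r) / 2 := this
      _ < 1 := by linarith
  have hballden : ∀ x ∈ Metric.ball z₀ ε, ∀ t : ℝ, ε ≤ ‖1 - (starRingEnd ℂ) x * ee t‖ := by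
    intro x hx t
    have h1 : ‖(starRingEnd ℂ) x * ee t‖ ≤ (1 + r) / 2 := by
      rw [norm_mul, RCLike.norm_conj, ee_norm, mul_one]; exact hball x hx
    have h2 := norm_sub_norm_le (1 : ℂ) ((starRingEnd ℂ) x * ee t)
    rw [norm_one] at h2
    rw [hε]; linarith
  -- differentiation under the integral sign
  have key : HasFDerivAt (fun z => ∫ t in (0:ℝ)..(2*Real.pi), Ff ψ z t)
      (∫ t in (0:ℝ)..(2*Real.pi), Ff' ψ z₀ t) z₀ := by
    apply intervalIntegral.hasFDerivAt_integral_of_dominated_of_fderiv_le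
      (bound := fun _ => 2 * (1 * M * 2 / ε ^ 3) + 1 * (1 * 1 * M / ε ^ 2)
        + 1 * (1 * 1 * M / ε ^ 2)) (Metric.ball_mem_nhds z₀ hεpos)
    · filter_upwards [Metric.ball_mem_nhds z₀ hεpos] with x hx
      exact (Ff_cont hψ (hball1 x hx)).aestronglyMeasurable
    · exact (Ff_cont hψ habs1).intervalIntegrable _ _
    · exact (Ff'_cont hψ habs1).aestronglyMeasurable
    · refine MeasureTheory.ae_of_all _ fun t _ x hx => ?_
      refine Ff'_bound ψ hεpos hM ?_ (hballden x hx) t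
      calc ‖x‖ ≤ (1 + r) / 2 := hball x hx
        _ ≤ 1 := by linarith
    · exact intervalIntegrable_const
    · exact MeasureTheory.ae_of_all _ fun t _ x hx => hasFDerivAt_Ff ψ (hball1 x hx) t
  -- rewrite Qop in terms of Ff
  have hQeq : Qop ψ = fun z => (1 / (2 * Real.pi)) • ∫ t in (0:ℝ)..(2*Real.pi), Ff ψ z t := by
    funext z
    rw [Qop]
    congr 1
    refine intervalIntegral.integral_congr fun t _ => ?_
    have hc : ((1 - ‖z‖ ^ 2 : ℝ) : ℂ) = 1 - z * (starRingEnd ℂ) z := by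
      rw [show ((1 - ‖z‖ ^ 2 : ℝ) : ℂ) = 1 - ((Complex.normSq z : ℝ) : ℂ) by
        rw [← Complex.sq_norm]; push_cast; ring, Complex.mul_conj]
    simp only [Ff, ee]
    rw [hc]
    ring
  have hQder : HasFDerivAt (Qop ψ)
      ((1 / (2 * Real.pi)) • ∫ t in (0:ℝ)..(2*Real.pi), Ff' ψ z₀ t) z₀ := by
    rw [hQeq]; exact key.const_smul (1 / (2 * Real.pi))
  -- split the derivative integral
  have hIa : IntervalIntegrable (fun t => Aa ψ z₀ t) MeasureTheory.volume 0 (2*Real.pi) :=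
    (Aa_cont hψ habs1).intervalIntegrable _ _
  have hIb : IntervalIntegrable (fun t => Bb ψ z₀ t) MeasureTheory.volume 0 (2*Real.pi) :=
    (Bb_cont hψ habs1).intervalIntegrable _ _
  have hsplit : (∫ t in (0:ℝ)..(2*Real.pi), Ff' ψ z₀ t)
      = (∫ t in (0:ℝ)..(2*Real.pi), Aa ψ z₀ t) • Cc
        + (∫ t in (0:ℝ)..(2*Real.pi), Bb ψ z₀ t) • ContinuousLinearMap.id ℝ ℂ := by
    rw [show (fun t => Ff' ψ z₀ t) = fun t => (Aa ψ z₀ t • Cc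
        + Bb ψ z₀ t • ContinuousLinearMap.id ℝ ℂ) from rfl,
      intervalIntegral.integral_add (f := fun t => Aa ψ z₀ t • Cc)
        (g := fun t => Bb ψ z₀ t • ContinuousLinearMap.id ℝ ℂ)
        (((Aa_cont hψ habs1).smul continuous_const).intervalIntegrable _ _)
        (((Bb_cont hψ habs1).smul continuous_const).intervalIntegrable _ _),
      intervalIntegral.integral_smul_const, intervalIntegral.integral_smul_const]
  -- integrability for the right-hand side manipulations
  have hbint : IntervalIntegrable (fun t => ψ (ee t) * (w^2 * ee t / (1 - w * ee t)^2))
      MeasureTheory.volume 0 (2*Real.pi) := by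
    apply Continuous.intervalIntegrable
    exact (hψ.comp ee_cont).mul (Continuous.div (by fun_prop) (by fun_prop)
      (fun t => pow_ne_zero 2 (den_ne hwabs t)))
  have hzint : IntervalIntegrable (fun t => w^2 * ee t / (1 - w * ee t)^2)
      MeasureTheory.volume 0 (2*Real.pi) :=
    Continuous.intervalIntegrable (Continuous.div (by fun_prop) (by fun_prop)
      (fun t => pow_ne_zero 2 (den_ne hwabs t))) _ _
  have hRHSint : (∫ t in (0:ℝ)..(2*Real.pi), (ψ (ee t) - ψ (ee θ)) * w^2 * ee t / (1 - w*ee t)^2)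
      = ∫ t in (0:ℝ)..(2*Real.pi), ψ (ee t) * (w^2 * ee t / (1 - w*ee t)^2) := by
    rw [show (fun t => (ψ (ee t) - ψ (ee θ)) * w^2 * ee t / (1 - w*ee t)^2)
        = fun t => ψ (ee t) * (w^2*ee t/(1-w*ee t)^2) - ψ (ee θ) * (w^2*ee t/(1-w*ee t)^2) from
        funext fun t => by ring,
      intervalIntegral.integral_sub hbint (hzint.const_mul _),
      intervalIntegral.integral_const_mul, integral_zero' hwabs, mul_zero, sub_zero]
  have hBeq : (∫ t in (0:ℝ)..(2*Real.pi), ψ (ee t) * (w^2 * ee t / (1 - w*ee t)^2))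
      = -∫ t in (0:ℝ)..(2*Real.pi), Bb ψ z₀ t := by
    rw [← intervalIntegral.integral_neg]
    refine intervalIntegral.integral_congr fun t _ => ?_
    simp only [Bb, ← hw]
    ring
  rw [wdz, hQder.fderiv, hsplit]
  simp only [ContinuousLinearMap.smul_apply, ContinuousLinearMap.add_apply,
    ContinuousLinearMap.id_apply, Cc_apply, map_one, Complex.conj_I, smul_eq_mul, ee_def]
  rw [hRHSint, hBeq]
  generalize (∫ t in (0:ℝ)..(2*Real.pi), Aa ψ z₀ t) = a
  generalize (∫ t in (0:ℝ)..(2*Real.pi), Bb ψ z₀ t) = b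
  simp only [Complex.real_smul]
  linear_combination (((1/(2*Real.pi) : ℝ) : ℂ) * (a - b)/2) * Complex.I_sq
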